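/- Let ε > 0 and θ ∈ (0, π/2] with (2π/ε)·n^{-1} ≤ θ. Then for every integer n ≥ 1 with εn ≥ 2π/θ, ∑_{k=n}^{n+⌊εn⌋} cos²(kθ + b) ≥ εn/4 for any real constant b. -/
import Mathlib


open Real

lemma tele_sum (a d : ℝ) (m : ℕ) :
    (∑ j ∈ Finset.range m, Real.cos (a + j * d)) * (2 * Real.sin (d / 2)) =
      Real.sin (a + m * d - d / 2) - Real.sin (a - d / 2) := by
  induction m with
  | zero => simp
  | succ m ih =>
    rw [Finset.sum_range_succ, add_mul, ih]
    have e1 : a + (↑(m + 1) : ℝ) * d - d / 2 = (a + m * d) + d / 2 := by push_cast; ring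
    have e2 : a + (m : ℝ) * d - d / 2 = (a + m * d) - d / 2 := by ring
    rw [e1, e2, Real.sin_add, Real.sin_sub]
    ring

theorem stmt3 (ε : ℝ) (hε : 0 < ε) (θ : ℝ) (hθ0 : 0 < θ) (hθ1 : θ ≤ π / 2)
    (n : ℕ) (hn : 1 ≤ n) (hlow : 2 * π / ε * ((n : ℝ))⁻¹ ≤ θ)
    (hbig : 2 * π / θ ≤ ε * (n : ℝ)) (b : ℝ) :
    ε * (n : ℝ) / 4 ≤
      ∑ k ∈ Finset.Icc n (n + ⌊ε * (n : ℝ)⌋₊), Real.cos ((k : ℝ) * θ + b) ^ 2 := by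
  set m := ⌊ε * (n : ℝ)⌋₊ with hm
  have hsinpos : 0 < Real.sin θ := Real.sin_pos_of_pos_of_lt_pi hθ0 (lt_of_le_of_lt hθ1 (by linarith [Real.pi_pos]))
  have hjordan : 2 / π * θ ≤ Real.sin θ := Real.mul_le_sin hθ0.le hθ1
  have hπ := Real.pi_pos
  -- rewrite the sum
  have hre : ∑ k ∈ Finset.Icc n (n + m), Real.cos ((k : ℝ) * θ + b) ^ 2 =
      ∑ j ∈ Finset.range (m + 1), Real.cos (((n + j : ℕ) : ℝ) * θ + b) ^ 2 := by
    rw [show Finset.Icc n (n + m) = Finset.Ico n (n + m + 1) by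
      rw [Finset.Ico_add_one_right_eq_Icc], Finset.sum_Ico_eq_sum_range,
      show n + m + 1 - n = m + 1 by omega]
  rw [hre]
  have hterm : ∀ j ∈ Finset.range (m + 1), Real.cos (((n + j : ℕ) : ℝ) * θ + b) ^ 2 =
      1 / 2 + Real.cos ((2 * n * θ + 2 * b) + (j : ℝ) * (2 * θ)) / 2 := by
    intro j _
    rw [Real.cos_sq]
    push_cast
    ring_nf
  rw [Finset.sum_congr rfl hterm, Finset.sum_add_distrib, Finset.sum_const, ← Finset.sum_div]
  set S := ∑ j ∈ Finset.range (m + 1), Real.cos ((2 * n * θ + 2 * b) + (j : ℝ) * (2 * θ)) with hS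
  have htel := tele_sum (2 * n * θ + 2 * b) (2 * θ) (m + 1)
  have hhalf : (2 * θ) / 2 = θ := by ring
  rw [hhalf] at htel
  have hb1 := Real.neg_one_le_sin (2 * ↑n * θ + 2 * b + ↑(m + 1) * (2 * θ) - θ)
  have hb2 := Real.sin_le_one (2 * ↑n * θ + 2 * b - θ)
  have hSbound : -2 ≤ S * (2 * Real.sin θ) := by rw [← hS] at htel; linarith
  have hSge : -(1 / Real.sin θ) ≤ S := by
    rw [neg_le, le_div_iff₀ hsinpos]
    nlinarith
  -- numeric facts
  have hfloor : ε * (n : ℝ) < m + 1 := by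
    exact_mod_cast Nat.lt_floor_add_one (ε * (n : ℝ))
  have hsin_inv : 1 / Real.sin θ ≤ π / (2 * θ) := by
    rw [div_le_div_iff₀ hsinpos (by positivity)]
    have h2 : π * (2 / π * θ) = 2 * θ := by field_simp
    nlinarith [mul_le_mul_of_nonneg_left hjordan hπ.le]
  have hθε : π / (2 * θ) ≤ ε * n / 4 := by
    rw [div_le_div_iff₀ (by positivity) (by norm_num)]
    have : 2 * π ≤ ε * n * θ := by
      rw [div_le_iff₀ hθ0] at hbig; linarith
    nlinarith
  have hcard : ((Finset.range (m + 1)).card : ℝ) = (m : ℝ) + 1 := by simp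
  rw [Finset.card_range]
  simp only [nsmul_eq_mul]
  push_cast
  linarith
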